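/- Suppose the three-dimensional simplex with vertices V₀ = 0, V₁ = e₁, V₂ = e₂, V₃ = a₁e₁ + a₂e₂ + b·e₃ (with b ≥ 1, 0 ≤ a₁,a₂ < b) is lattice-regular. Then a₁ = a₂ = b − 1 and b ∈ {1, 2, 4}. -/
import Mathlib

private lemma small_dvd_zero (b t d : ℤ) (hb : 1 ≤ b) (h : b * t = d)
    (h1 : -b < d) (h2 : d < b) : d = 0 := by
  rcases lt_trichotomy t 0 with h' | h' | h'
  · nlinarith
  · subst h'; simp at h; omega
  · nlinarith

private lemma numtheory (a b : ℤ) (hb : 1 ≤ b) (ha : 0 ≤ a) (ha' : a < b)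
    (hd1 : ∃ m : ℤ, b * m = 3 * a - 1)
    (hd2 : ∃ n : ℤ, b * n = 2 * a * (a - 1)) :
    a = b - 1 ∧ (b = 1 ∨ b = 2 ∨ b = 4) := by
  obtain ⟨m, hm⟩ := hd1
  obtain ⟨n, hn⟩ := hd2
  rcases eq_or_lt_of_le hb with hb1 | hb2
  · omega
  -- b ≥ 2, so m = 1 or m = 2
  have hm12 : m = 1 ∨ m = 2 := by
    rcases lt_trichotomy m 0 with h' | h' | h'
    · nlinarith
    · subst h'; simp at hm; omega
    · have h1 : 1 ≤ m := h'
      have h3 : m ≤ 2 := by nlinarith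
      omega
  have hb4 : b ∣ 4 := by
    rcases hm12 with rfl | rfl
    · exact ⟨6 * a - 4 - 9 * n, by linear_combination 9 * hn + (4 - 6 * a) * hm⟩
    · exact ⟨8 * b - 4 - 9 * n, by linear_combination 9 * hn + (4 - 6 * a - 4 * b) * hm⟩
  have hble : b ≤ 4 := Int.le_of_dvd (by norm_num) hb4
  obtain ⟨k, hk⟩ := hb4
  rcases hm12 with rfl | rfl <;> interval_cases b <;> omega

theorem regular_three_dim_simplex_classification
    (a₁ a₂ b : ℤ) (hb : 1 ≤ b)
    (h₁ : 0 ≤ a₁) (h₁' : a₁ < b) (h₂ : 0 ≤ a₂) (h₂' : a₂ < b)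
    (hreg : ∀ σ : Equiv.Perm (Fin 4),
      ∃ (A : Matrix (Fin 3) (Fin 3) ℤ) (c : Fin 3 → ℤ),
        (A.det = 1 ∨ A.det = -1) ∧
        ∀ k : Fin 4,
          A.mulVec (![![0,0,0], ![1,0,0], ![0,1,0], ![a₁,a₂,b]] k) + c =
            ![![0,0,0], ![1,0,0], ![0,1,0], ![a₁,a₂,b]] (σ k)) :
    a₁ = b - 1 ∧ a₂ = b - 1 ∧ (b = 1 ∨ b = 2 ∨ b = 4) := by
  -- Step 1 : swap (1 2) forces a₁ = a₂
  have haa : a₁ = a₂ := by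
    obtain ⟨A, c, _, h⟩ := hreg (Equiv.swap 1 2)
    have h00 := congrFun (h 0) 0
    have h10 := congrFun (h 1) 0
    have h20 := congrFun (h 2) 0
    have h30 := congrFun (h 3) 0
    simp [Matrix.mulVec, dotProduct, Fin.sum_univ_three, Equiv.swap_apply_def,
      Pi.add_apply] at h00 h10 h20 h30
    have hA00 : A 0 0 = 0 := by omega
    have hA01 : A 0 1 = 1 := by omega
    rw [hA00, hA01] at h30
    have key : b * A 0 2 = a₁ - a₂ := by linear_combination h30 - h00
    have := small_dvd_zero b (A 0 2) (a₁ - a₂) hb key (by omega) (by omega)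
    omega
  -- Step 2 : swap (0 1) gives b ∣ 3a₁ - 1
  have hd1 : ∃ m : ℤ, b * m = 3 * a₁ - 1 := by
    obtain ⟨A, c, _, h⟩ := hreg (Equiv.swap 0 1)
    have h00 := congrFun (h 0) 0
    have h10 := congrFun (h 1) 0
    have h20 := congrFun (h 2) 0
    have h30 := congrFun (h 3) 0
    simp [Matrix.mulVec, dotProduct, Fin.sum_univ_three, Equiv.swap_apply_def,
      Pi.add_apply] at h00 h10 h20 h30
    have hA00 : A 0 0 = -1 := by omega
    have hA01 : A 0 1 = -1 := by omega
    rw [hA00, hA01] at h30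
    exact ⟨A 0 2, by linear_combination h30 - h00 - haa⟩
  -- Step 3 : swap (0 3) gives b ∣ 2a₁(a₁ - 1)
  have hd2 : ∃ n : ℤ, b * n = 2 * a₁ * (a₁ - 1) := by
    obtain ⟨A, c, _, h⟩ := hreg (Equiv.swap 0 3)
    have h00 := congrFun (h 0) 0
    have h10 := congrFun (h 1) 0
    have h20 := congrFun (h 2) 0
    have h30 := congrFun (h 3) 0
    simp [Matrix.mulVec, dotProduct, Fin.sum_univ_three, Equiv.swap_apply_def,
      Pi.add_apply] at h00 h10 h20 h30
    have hA00 : A 0 0 = 1 - a₁ := by omega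
    have hA01 : A 0 1 = -a₂ := by omega
    rw [hA00, hA01] at h30
    exact ⟨A 0 2, by linear_combination h30 - h00 - (a₁ + a₂) * haa⟩
  obtain ⟨he, hcases⟩ := numtheory a₁ b hb h₁ h₁' hd1 hd2
  exact ⟨he, by omega, hcases⟩
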